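/- Let ω > 5a > 0 and consider the scalar equation u_{k+1} = A_k u_k with A_k = e^{−ω + ak(−1)^k − a(k−1)(−1)^{k−1}}. Then Σ_ED(A) = (0,∞), i.e., for no γ > 0 does the weighted equation u_{k+1} = (1/γ)A_k u_k admit an exponential dichotomy. -/

import Mathlib

open Matrix

attribute [local instance] Matrix.linftyOpNormedAddCommGroup

abbrev Mat (N : ℕ) := Matrix (Fin N) (Fin N) ℝ

noncomputable def fundSolNat {N : ℕ} (A : ℤ → GL (Fin N) ℝ) : ℕ → GL (Fin N) ℝ
  | 0 => 1
  | n + 1 => A (n : ℤ) * fundSolNat A n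

noncomputable def fundSolNeg {N : ℕ} (A : ℤ → GL (Fin N) ℝ) : ℕ → GL (Fin N) ℝ
  | 0 => (A (-1))⁻¹
  | n + 1 => (A (Int.negSucc (n + 1)))⁻¹ * fundSolNeg A n

noncomputable def fundSol {N : ℕ} (A : ℤ → GL (Fin N) ℝ) : ℤ → GL (Fin N) ℝ
  | Int.ofNat n => fundSolNat A n
  | Int.negSucc n => fundSolNeg A n

/-- The evolution operator `Φ(k,l)` of `x_{k+1} = A_k x_k`. -/
noncomputable def evol {N : ℕ} (A : ℤ → GL (Fin N) ℝ) (k l : ℤ) : Mat N :=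
  ↑(fundSol A k * (fundSol A l)⁻¹)

def IsInvariantProjector {N : ℕ} (A : ℤ → GL (Fin N) ℝ) (P : ℤ → Mat N) : Prop :=
  (∀ k, P k * P k = P k) ∧ ∀ k, P (k + 1) * (A k : Mat N) = (A k : Mat N) * P k

/-- Evolution operator `Φ_γ(k,l) = γ^{-(k-l)} Φ(k,l)` of `x_{k+1} = (1/γ) A_k x_k`. -/
noncomputable def evolW {N : ℕ} (A : ℤ → GL (Fin N) ℝ) (γ : ℝ) (k l : ℤ) : Mat N :=
  γ ^ (l - k) • evol A k l

def NEDWith {N : ℕ} (A : ℤ → GL (Fin N) ℝ) (γ : ℝ) (P : ℤ → Mat N) (K α ε : ℝ) : Prop :=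
  IsInvariantProjector A P ∧ 1 ≤ K ∧ 0 < α ∧ α < 1 ∧ 1 ≤ ε ∧
    (∀ k l : ℤ, l ≤ k → ‖evolW A γ k l * P l‖ ≤ K * α ^ (k - l) * ε ^ l) ∧
    (∀ k l : ℤ, k ≤ l → ‖evolW A γ k l * (1 - P l)‖ ≤ K * (1 / α) ^ (k - l) * ε ^ l)

def HasNED {N : ℕ} (A : ℤ → GL (Fin N) ℝ) (γ : ℝ) : Prop :=
  ∃ P K α ε, NEDWith A γ P K α ε

def HasStrongNED {N : ℕ} (A : ℤ → GL (Fin N) ℝ) (γ : ℝ) : Prop :=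
  ∃ P K α ε, NEDWith A γ P K α ε ∧ α * ε ^ 2 < 1

def HasED {N : ℕ} (A : ℤ → GL (Fin N) ℝ) (γ : ℝ) : Prop :=
  ∃ P K α, NEDWith A γ P K α 1

def SigmaNED {N : ℕ} (A : ℤ → GL (Fin N) ℝ) : Set ℝ := {γ | 0 < γ ∧ ¬ HasStrongNED A γ}

def rhoNED {N : ℕ} (A : ℤ → GL (Fin N) ℝ) : Set ℝ := {γ | 0 < γ ∧ HasStrongNED A γ}

def SigmaED {N : ℕ} (A : ℤ → GL (Fin N) ℝ) : Set ℝ := {γ | 0 < γ ∧ ¬ HasED A γ}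

def stableSet {N : ℕ} (A : ℤ → GL (Fin N) ℝ) (γ ε : ℝ) (l : ℤ) : Set (Fin N → ℝ) :=
  {ξ | ∃ C : ℝ, ∀ k : ℤ, l ≤ k → ‖(evol A k l).mulVec ξ‖ * γ ^ (-k) * ε ^ (-l) ≤ C}

def unstableSet {N : ℕ} (A : ℤ → GL (Fin N) ℝ) (γ ε : ℝ) (l : ℤ) : Set (Fin N → ℝ) :=
  {ξ | ∃ C : ℝ, ∀ k : ℤ, k ≤ l → ‖(evol A k l).mulVec ξ‖ * γ ^ (-k) * ε ^ (-l) ≤ C}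

noncomputable def exExp (ω a : ℝ) (k : ℤ) : ℝ :=
  -ω + a * k * (-1 : ℝ) ^ k - a * (k - 1) * (-1 : ℝ) ^ (k - 1)

noncomputable def exScalar (ω a : ℝ) (k : ℤ) : GL (Fin 1) ℝ :=
  Matrix.GeneralLinearGroup.mkOfDetNeZero
    (Matrix.diagonal ![Real.exp (exExp ω a k)])
    (by
      rw [Matrix.det_diagonal, Fin.prod_univ_one]
      simp only [Matrix.cons_val_zero]
      exact (Real.exp_pos _).ne')

lemma fundSol_succ {N : ℕ} (A : ℤ → GL (Fin N) ℝ) (l : ℤ) :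
    fundSol A (l + 1) = A l * fundSol A l := by
  cases l with
  | ofNat n => rfl
  | negSucc n =>
    cases n with
    | zero =>
      show fundSol A 0 = A (-1) * fundSol A (Int.negSucc 0)
      show (1 : GL (Fin N) ℝ) = A (-1) * (A (-1))⁻¹
      simp
    | succ m =>
      have h : Int.negSucc (m + 1) + 1 = Int.negSucc m := rfl
      rw [h]
      show fundSolNeg A m = A (Int.negSucc (m+1)) * ((A (Int.negSucc (m + 1)))⁻¹ * fundSolNeg A m)
      rw [mul_inv_cancel_left]

lemma evol_succ {N : ℕ} (A : ℤ → GL (Fin N) ℝ) (l : ℤ) :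
    evol A (l + 1) l = (A l : Mat N) := by
  unfold evol
  rw [fundSol_succ, mul_inv_cancel_right]

lemma evol_pred {N : ℕ} (A : ℤ → GL (Fin N) ℝ) (l : ℤ) :
    evol A l (l + 1) = ((A l)⁻¹ : GL (Fin N) ℝ) := by
  unfold evol
  rw [fundSol_succ, _root_.mul_inv_rev, mul_inv_cancel_left]

lemma norm_one_one (M : Mat 1) : ‖M‖ = |M 0 0| := by
  simp [Matrix.linfty_opNorm_def, Fin.sum_univ_one, Real.nnnorm_abs]

lemma mul_apply_one_one (M N : Mat 1) : (M * N) 0 0 = M 0 0 * N 0 0 := by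
  simp [Matrix.mul_apply]

lemma exScalar_apply (ω a : ℝ) (k : ℤ) :
    (exScalar ω a k : Mat 1) 0 0 = Real.exp (exExp ω a k) := rfl

lemma exScalar_inv_apply (ω a : ℝ) (k : ℤ) :
    (((exScalar ω a k)⁻¹ : GL (Fin 1) ℝ) : Mat 1) 0 0 = Real.exp (-exExp ω a k) := by
  have h1 : ((((exScalar ω a k)⁻¹ * exScalar ω a k : GL (Fin 1) ℝ)) : Mat 1) 0 0 = 1 := by
    rw [inv_mul_cancel]; rfl
  rw [Units.val_mul, mul_apply_one_one, exScalar_apply] at h1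
  have h2 := Real.exp_ne_zero (exExp ω a k)
  rw [Real.exp_neg]
  field_simp at h1 ⊢
  linarith [h1]

lemma exExp_even (ω a : ℝ) (m : ℕ) : exExp ω a (2 * m) = -ω + a * (4 * m - 1) := by
  have h1 : ((-1 : ℝ)) ^ ((2 * m : ℤ)) = 1 := Even.neg_one_zpow ⟨m, by ring⟩
  have h2 : ((-1 : ℝ)) ^ ((2 * m : ℤ) - 1) = -1 :=
    Odd.neg_one_zpow ⟨(m : ℤ) - 1, by ring⟩
  unfold exExp
  push_cast
  rw [h1, h2]
  push_cast
  ring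

lemma exExp_odd (ω a : ℝ) (m : ℕ) : exExp ω a (2 * m + 1) = -ω - a * (4 * m + 1) := by
  have h1 : ((-1 : ℝ)) ^ ((2 * m : ℤ) + 1) = -1 := Odd.neg_one_zpow ⟨m, by ring⟩
  have h2 : ((-1 : ℝ)) ^ ((2 * m : ℤ) + 1 - 1) = 1 := by
    have : (2 * m : ℤ) + 1 - 1 = 2 * m := by ring
    rw [this]; exact Even.neg_one_zpow ⟨m, by ring⟩
  unfold exExp
  push_cast
  rw [h1, h2]
  push_cast
  ring

/-- For `ω > 5a > 0`, the scalar equation `u_{k+1} = A_k u_k` with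
`A_k = e^{−ω + ak(−1)^k − a(k−1)(−1)^{k−1}}` has `Σ_ED(A) = (0,∞)`: no weighted
equation `u_{k+1} = (1/γ) A_k u_k` admits an exponential dichotomy. -/
theorem example_sigmaED_full (ω a : ℝ) (ha : 0 < a) (haω : 5 * a < ω) :
    SigmaED (exScalar ω a) = Set.Ioi 0 := by
  ext γ
  simp only [SigmaED, Set.mem_setOf_eq, Set.mem_Ioi]
  constructor
  · exact fun h => h.1
  · intro hγ
    refine ⟨hγ, ?_⟩
    rintro ⟨P, K, α, ⟨hpr, hstep⟩, hK, hα0, hα1, -, hstab, hunst⟩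
    set A := exScalar ω a with hA
    -- the projector is constant
    have hEne : ∀ k : ℤ, Real.exp (exExp ω a k) ≠ 0 := fun k => Real.exp_ne_zero _
    have hstep' : ∀ k : ℤ, P (k + 1) 0 0 = P k 0 0 := by
      intro k
      have h := congrFun (congrFun (hstep k) 0) 0
      rw [mul_apply_one_one, mul_apply_one_one, exScalar_apply] at h
      rw [mul_comm (Real.exp (exExp ω a k))] at h
      exact mul_right_cancel₀ (hEne k) h
    have hconst : ∀ k : ℤ, P k 0 0 = P 0 0 0 := by
      intro k
      induction k using Int.induction_on with
      | zero => rfl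
      | succ n ih => rw [hstep' n, ih]
      | pred n ih => rw [← ih, ← hstep' (-(n:ℤ) - 1)]; norm_num
    have hidem : P 0 0 0 * P 0 0 0 = P 0 0 0 := by
      have h := congrFun (congrFun (hpr 0) 0) 0
      rwa [mul_apply_one_one] at h
    have hKα : 0 < K * α := mul_pos (lt_of_lt_of_le one_pos hK) hα0
    have hsplit : P 0 0 0 * (P 0 0 0 - 1) = 0 := by linear_combination hidem
    rcases mul_eq_zero.mp hsplit with h0 | h1
    on_goal 2 => replace h1 : P 0 0 0 = 1 := by linarith
    · -- P = 0 : use the unstable estimate at (l, l+1) with l = 2m+1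
      obtain ⟨m, hm⟩ := exists_nat_gt ((Real.log (K * α / γ) - ω + a * 4) / (4 * a))
      set l : ℤ := 2 * m + 1 with hl
      have hb := hunst l (l + 1) (by omega)
      have hexp : l - (l + 1) = -1 := by ring
      have hexp2 : (l + 1) - l = 1 := by ring
      have hval : evolW A γ l (l + 1) * (1 - P (l + 1)) =
          (γ ^ ((l + 1) - l)) • ((((exScalar ω a l)⁻¹ : GL (Fin 1) ℝ) : Mat 1) * (1 - P (l+1))) := by
        rw [evolW, evol_pred, Matrix.smul_mul]
      have hnorm : ‖evolW A γ l (l + 1) * (1 - P (l + 1))‖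
          = γ * Real.exp (-exExp ω a l) := by
        rw [hval, hexp2, zpow_one, norm_one_one]
        rw [Matrix.smul_apply, mul_apply_one_one, exScalar_inv_apply]
        have hP : (1 - P (l + 1)) 0 0 = 1 := by
          simp [Matrix.sub_apply, hconst, h0]
        rw [hP, smul_eq_mul, mul_one, abs_of_pos (by positivity)]
      rw [hnorm, hexp, _root_.one_zpow, mul_one] at hb
      have hinvα : (1 / α) ^ (-1 : ℤ) = α := by
        rw [_root_.zpow_neg_one, one_div, inv_inv]
      rw [hinvα] at hb
      -- but the left side is huge
      have hle : exExp ω a l = -ω - a * (4 * m + 1) := exExp_odd ω a m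
      have hlarge : K * α / γ < Real.exp (-exExp ω a l) := by
        rw [hle]
        have h1 : Real.log (K * α / γ) < -(-ω - a * (4 * m + 1)) := by
          have := (div_lt_iff₀ (by positivity : (0:ℝ) < 4 * a)).mp hm
          nlinarith
        calc K * α / γ = Real.exp (Real.log (K * α / γ)) :=
              (Real.exp_log (by positivity)).symm
          _ < _ := Real.exp_lt_exp.mpr h1
      rw [div_lt_iff₀ hγ] at hlarge
      nlinarith
    · -- P = 1 : use the stable estimate at (l+1, l) with l = 2m
      obtain ⟨m, hm⟩ := exists_nat_gt ((Real.log (K * α * γ) + ω + a) / (4 * a))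
      set l : ℤ := 2 * m with hl
      have hb := hstab (l + 1) l (by omega)
      have hexp : l - (l + 1) = -1 := by ring
      have hexp2 : (l + 1) - l = 1 := by ring
      have hval : evolW A γ (l + 1) l * P l =
          (γ ^ (l - (l + 1))) • (((exScalar ω a l : Mat 1)) * P l) := by
        rw [evolW, evol_succ, Matrix.smul_mul]
      have hnorm : ‖evolW A γ (l + 1) l * P l‖ = γ⁻¹ * Real.exp (exExp ω a l) := by
        rw [hval, hexp, _root_.zpow_neg_one, norm_one_one]
        rw [Matrix.smul_apply, mul_apply_one_one, exScalar_apply]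
        have hP : P l 0 0 = 1 := by rw [hconst, h1]
        rw [hP, smul_eq_mul, mul_one, abs_of_pos (by positivity)]
      rw [hnorm, hexp2, zpow_one, _root_.one_zpow, mul_one] at hb
      have hle : exExp ω a l = -ω + a * (4 * m - 1) := exExp_even ω a m
      have hlarge : K * α * γ < Real.exp (exExp ω a l) := by
        rw [hle]
        have h1 : Real.log (K * α * γ) < -ω + a * (4 * m - 1) := by
          have := (div_lt_iff₀ (by positivity : (0:ℝ) < 4 * a)).mp hm
          nlinarith
        calc K * α * γ = Real.exp (Real.log (K * α * γ)) :=
              (Real.exp_log (by positivity)).symm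
          _ < _ := Real.exp_lt_exp.mpr h1
      have h2 : K * α < Real.exp (exExp ω a l) / γ := (lt_div_iff₀ hγ).mpr hlarge
      rw [div_eq_inv_mul] at h2
      linarith
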